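/- Let Q ∈ ℂ^{n×n} be Hermitian positive semidefinite, q ∈ ℂⁿ, and ρ > 0. Consider the convex trust-region subproblem: minimize g(x) = Re(xᴴQx) − 2Re(qᴴx) subject to ‖x‖₂ ≤ ρ. Suppose that either q is NOT orthogonal to the null space of Q, or q is orthogonal to the null space of Q but ‖Q†q‖₂ > ρ. Then there exists a unique μ⋆ > 0 such that ‖(Q + μ⋆I_n)⁻¹q‖₂ = ρ, and x⋆ = (Q + μ⋆I_n)⁻¹q is the unique global minimizer of the problem. -/

import Mathlib

open Matrix ComplexOrder

/-- The Euclidean norm ‖x‖₂ = √(xᴴx) of a complex vector. -/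
noncomputable def eucNorm {n : ℕ} (x : Fin n → ℂ) : ℝ :=
  Real.sqrt ((star x ⬝ᵥ x).re)

variable {n : ℕ}

lemma rsq_nonneg (x : Fin n → ℂ) : 0 ≤ (star x ⬝ᵥ x).re := by
  have h := dotProduct_star_self_nonneg x
  rw [Complex.le_def] at h
  simpa using h.1

lemma eucNorm_sq (x : Fin n → ℂ) : eucNorm x ^ 2 = (star x ⬝ᵥ x).re :=
  Real.sq_sqrt (rsq_nonneg x)

lemma eucNorm_nonneg (x : Fin n → ℂ) : 0 ≤ eucNorm x := Real.sqrt_nonneg _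

lemma rsq_eq_zero_iff {x : Fin n → ℂ} : (star x ⬝ᵥ x).re = 0 ↔ x = 0 := by
  constructor
  · intro h
    have h2 := dotProduct_star_self_nonneg x
    rw [Complex.le_def] at h2
    have : star x ⬝ᵥ x = 0 := Complex.ext (by simpa using h) (by simpa using h2.2.symm)
    exact dotProduct_star_self_eq_zero.mp this
  · rintro rfl; simp

lemma eucNorm_eq_norm (x : Fin n → ℂ) :
    eucNorm x = ‖(WithLp.equiv 2 (Fin n → ℂ)).symm x‖ := by
  rw [EuclideanSpace.norm_eq, eucNorm]
  congr 1
  rw [dotProduct, Complex.re_sum]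
  refine Finset.sum_congr rfl fun i _ => ?_
  simp [Complex.mul_re, Complex.sq_norm, Complex.normSq_apply, WithLp.equiv]

-- Hermitian swap
lemma herm_swap {B : Matrix (Fin n) (Fin n) ℂ} (hB : B.IsHermitian) (x y : Fin n → ℂ) :
    star x ⬝ᵥ (B *ᵥ y) = star (B *ᵥ x) ⬝ᵥ y := by
  rw [Matrix.dotProduct_mulVec, Matrix.star_mulVec, hB.eq]

lemma re_dot_comm (x y : Fin n → ℂ) : (star x ⬝ᵥ y).re = (star y ⬝ᵥ x).re := by
  rw [Matrix.star_dotProduct]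
  simp

-- PosDef of Q + μ I
lemma posdef_shift {Q : Matrix (Fin n) (Fin n) ℂ} (hQ : Q.PosSemidef) {μ : ℝ} (hμ : 0 < μ) :
    (Q + (μ : ℂ) • 1).PosDef := by
  refine Matrix.PosDef.posSemidef_add hQ ?_
  have : ((μ : ℂ) • 1 : Matrix (Fin n) (Fin n) ℂ) = Matrix.diagonal (fun _ => (μ : ℂ)) := by
    rw [Matrix.smul_one_eq_diagonal]
  rw [this]
  rw [Matrix.posDef_diagonal_iff]
  intro i
  simpa using hμ

section main
variable {Q : Matrix (Fin n) (Fin n) ℂ}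

lemma mul_inv_vec (hPD : Q.PosDef) (z : Fin n → ℂ) : Q *ᵥ (Q⁻¹ *ᵥ z) = z := by
  have := hPD.isUnit.invertible
  rw [Matrix.mulVec_mulVec, Matrix.mul_inv_of_invertible, Matrix.one_mulVec]

lemma inv_mul_vec (hPD : Q.PosDef) (z : Fin n → ℂ) : Q⁻¹ *ᵥ (Q *ᵥ z) = z := by
  have := hPD.isUnit.invertible
  rw [Matrix.mulVec_mulVec, Matrix.inv_mul_of_invertible, Matrix.one_mulVec]

end main

section mono
variable {Q : Matrix (Fin n) (Fin n) ℂ} {q : Fin n → ℂ}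

lemma rsq_expand (a c : Fin n → ℂ) :
    (star (a + c) ⬝ᵥ (a + c)).re
      = (star a ⬝ᵥ a).re + 2 * (star a ⬝ᵥ c).re + (star c ⬝ᵥ c).re := by
  simp only [star_add, add_dotProduct, dotProduct_add, Complex.add_re]
  have := re_dot_comm a c
  ring_nf
  rw [re_dot_comm c a]
  ring

lemma strict_mono_rsq (hQ : Q.PosSemidef) (hq : q ≠ 0) {μ₁ μ₂ : ℝ}
    (h1 : 0 < μ₁) (h12 : μ₁ < μ₂) :
    (star ((Q + (μ₂ : ℂ) • 1)⁻¹ *ᵥ q) ⬝ᵥ ((Q + (μ₂ : ℂ) • 1)⁻¹ *ᵥ q)).re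
      < (star ((Q + (μ₁ : ℂ) • 1)⁻¹ *ᵥ q) ⬝ᵥ ((Q + (μ₁ : ℂ) • 1)⁻¹ *ᵥ q)).re := by
  set A₁ := Q + (μ₁ : ℂ) • 1 with hA₁
  set A₂ := Q + (μ₂ : ℂ) • 1 with hA₂
  have hP1 : A₁.PosDef := posdef_shift hQ h1
  have hP2 : A₂.PosDef := posdef_shift hQ (h1.trans h12)
  set x₁ := A₁⁻¹ *ᵥ q with hx₁
  set x₂ := A₂⁻¹ *ᵥ q with hx₂
  have hA2x2 : A₂ *ᵥ x₂ = q := mul_inv_vec hP2 q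
  have hx2ne : x₂ ≠ 0 := by
    intro h; apply hq; rw [← hA2x2, h, Matrix.mulVec_zero]
  set u := A₁⁻¹ *ᵥ x₂ with hu
  have hA1u : A₁ *ᵥ u = x₂ := mul_inv_vec hP1 x₂
  have hune : u ≠ 0 := by
    intro h; apply hx2ne; rw [← hA1u, h, Matrix.mulVec_zero]
  set δ : ℝ := μ₂ - μ₁ with hδ
  have hδpos : 0 < δ := sub_pos.mpr h12
  have key : x₁ = x₂ + (δ : ℂ) • u := by
    have hA : A₁ *ᵥ (x₂ + (δ : ℂ) • u) = q := by
      rw [Matrix.mulVec_add, Matrix.mulVec_smul, hA1u, ← hA2x2]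
      rw [hA₁, hA₂, Matrix.add_mulVec, Matrix.add_mulVec, Matrix.smul_mulVec,
        Matrix.smul_mulVec, Matrix.one_mulVec]
      push_cast [hδ]
      rw [sub_smul]
      ring_nf
    calc x₁ = A₁⁻¹ *ᵥ (A₁ *ᵥ (x₂ + (δ : ℂ) • u)) := by rw [hA]
    _ = x₂ + (δ : ℂ) • u := inv_mul_vec hP1 _
  have hpos : 0 < (star x₂ ⬝ᵥ u).re := by
    have h : star x₂ ⬝ᵥ u = star u ⬝ᵥ (A₁ *ᵥ u) := by
      rw [← hA1u]; exact (herm_swap hP1.isHermitian u u).symm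
    rw [h]; exact hP1.re_dotProduct_pos hune
  have hexp : (star x₁ ⬝ᵥ x₁).re
      = (star x₂ ⬝ᵥ x₂).re + 2 * (δ * (star x₂ ⬝ᵥ u).re)
        + δ ^ 2 * (star u ⬝ᵥ u).re := by
    rw [key, rsq_expand]
    congr 2
    · rw [dotProduct_smul]
      simp [Complex.ofReal_mul, Complex.mul_re]
    · simp only [star_smul, smul_dotProduct, dotProduct_smul]
      rw [Complex.star_def, Complex.conj_ofReal]
      simp [Complex.mul_re, Complex.ofReal_re, Complex.ofReal_im]
      ring
  rw [hexp]
  have h2 : 0 < 2 * (δ * (star x₂ ⬝ᵥ u).re) := by positivity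
  have h3 : 0 ≤ δ ^ 2 * (star u ⬝ᵥ u).re := by
    have := rsq_nonneg u; positivity
  linarith

end mono

section cont
variable {Q : Matrix (Fin n) (Fin n) ℂ} {q : Fin n → ℂ}

lemma contF (hQ : Q.PosSemidef) (q : Fin n → ℂ) {μ : ℝ} (hμ : 0 < μ) :
    ContinuousAt (fun t : ℝ => eucNorm ((Q + (t : ℂ) • 1)⁻¹ *ᵥ q)) μ := by
  have hA : Continuous (fun t : ℝ => Q + (t : ℂ) • (1 : Matrix (Fin n) (Fin n) ℂ)) := by
    exact continuous_const.add ((Complex.continuous_ofReal).smul continuous_const)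
  have hPD : (Q + (μ : ℂ) • 1).PosDef := posdef_shift hQ hμ
  have hdet : IsUnit (Q + (μ : ℂ) • 1).det :=
    (Matrix.isUnit_iff_isUnit_det _).mp hPD.isUnit
  have hinv : ContinuousAt Inv.inv (Q + (μ : ℂ) • 1) :=
    continuousAt_matrix_inv _ (NormedRing.inverse_continuousAt hdet.unit)
  have hAc : ContinuousAt (fun t : ℝ => Q + (t : ℂ) • (1 : Matrix (Fin n) (Fin n) ℂ)) μ :=
    hA.continuousAt
  have h0 : ContinuousAt (fun t : ℝ => (Q + (t : ℂ) • 1)⁻¹) μ :=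
    ContinuousAt.comp (g := Inv.inv)
      (f := fun t : ℝ => Q + (t : ℂ) • (1 : Matrix (Fin n) (Fin n) ℂ)) hinv hAc
  have hmv : Continuous (fun M : Matrix (Fin n) (Fin n) ℂ => M *ᵥ q) :=
    Continuous.matrix_mulVec continuous_id continuous_const
  have h1 : ContinuousAt (fun t : ℝ => (Q + (t : ℂ) • 1)⁻¹ *ᵥ q) μ :=
    hmv.continuousAt.comp h0
  have hdp : Continuous (fun v : Fin n → ℂ => (star v ⬝ᵥ v).re) :=
    Complex.continuous_re.comp (Continuous.dotProduct continuous_star continuous_id)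
  exact Real.continuous_sqrt.continuousAt.comp (hdp.continuousAt.comp h1)

end cont

lemma cs_dot (v w : Fin n → ℂ) : ‖star v ⬝ᵥ w‖ ≤ eucNorm v * eucNorm w := by
  have h := norm_inner_le_norm (𝕜 := ℂ) ((WithLp.equiv 2 (Fin n → ℂ)).symm v)
    ((WithLp.equiv 2 (Fin n → ℂ)).symm w)
  change ‖w ⬝ᵥ star v‖ ≤ _ at h
  rw [dotProduct_comm] at h
  rw [eucNorm_eq_norm, eucNorm_eq_norm]
  simpa using h

section bounds
variable {Q : Matrix (Fin n) (Fin n) ℂ} {q : Fin n → ℂ}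

lemma dot_shift (μ : ℝ) (x y : Fin n → ℂ) :
    star x ⬝ᵥ ((Q + (μ : ℂ) • 1) *ᵥ y)
      = star x ⬝ᵥ (Q *ᵥ y) + (μ : ℂ) * (star x ⬝ᵥ y) := by
  rw [Matrix.add_mulVec, dotProduct_add, Matrix.smul_mulVec, Matrix.one_mulVec,
    dotProduct_smul]
  simp [smul_eq_mul]

lemma bound_large (hQ : Q.PosSemidef) {μ : ℝ} (hμ : 0 < μ) :
    eucNorm ((Q + (μ : ℂ) • 1)⁻¹ *ᵥ q) ≤ eucNorm q / μ := by
  set x := (Q + (μ : ℂ) • 1)⁻¹ *ᵥ q with hx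
  have hPD := posdef_shift hQ hμ
  have hAx : (Q + (μ : ℂ) • 1) *ᵥ x = q := mul_inv_vec hPD q
  have h1 : μ * (star x ⬝ᵥ x).re ≤ (star x ⬝ᵥ q).re := by
    rw [← hAx, dot_shift]
    have hnn : 0 ≤ (star x ⬝ᵥ (Q *ᵥ x)).re := hQ.re_dotProduct_nonneg x
    simp only [Complex.add_re, Complex.mul_re, Complex.ofReal_re, Complex.ofReal_im]
    nlinarith [hnn]
  have h2 : (star x ⬝ᵥ q).re ≤ eucNorm x * eucNorm q := by
    calc (star x ⬝ᵥ q).re ≤ ‖star x ⬝ᵥ q‖ := Complex.re_le_norm _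
    _ ≤ eucNorm x * eucNorm q := cs_dot x q
  have h3 : μ * eucNorm x ^ 2 ≤ eucNorm x * eucNorm q := by
    rw [eucNorm_sq]; exact h1.trans h2
  rcases eq_or_lt_of_le (eucNorm_nonneg x) with h0 | h0
  · rw [← h0]; exact div_nonneg (eucNorm_nonneg q) hμ.le
  · rw [le_div_iff₀ hμ]
    nlinarith
end bounds

lemma eucNorm_smul (c : ℝ) (w : Fin n → ℂ) : eucNorm ((c : ℂ) • w) = |c| * eucNorm w := by
  rw [eucNorm_eq_norm, eucNorm_eq_norm]
  have : (WithLp.equiv 2 (Fin n → ℂ)).symm ((c : ℂ) • w)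
      = (c : ℂ) • (WithLp.equiv 2 (Fin n → ℂ)).symm w := rfl
  rw [this, norm_smul]
  simp

lemma eucNorm_sub_le (a b : Fin n → ℂ) : eucNorm a - eucNorm b ≤ eucNorm (a - b) := by
  rw [eucNorm_eq_norm, eucNorm_eq_norm, eucNorm_eq_norm]
  have : (WithLp.equiv 2 (Fin n → ℂ)).symm (a - b)
      = (WithLp.equiv 2 (Fin n → ℂ)).symm a - (WithLp.equiv 2 (Fin n → ℂ)).symm b := rfl
  rw [this]
  exact norm_sub_norm_le _ _

section small
variable {Q : Matrix (Fin n) (Fin n) ℂ} {q : Fin n → ℂ}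

lemma caseA_bound (hQ : Q.PosSemidef) {v : Fin n → ℂ} (hv : Q *ᵥ v = 0) {μ : ℝ} (hμ : 0 < μ) :
    ‖star v ⬝ᵥ q‖ / μ ≤ eucNorm v * eucNorm ((Q + (μ : ℂ) • 1)⁻¹ *ᵥ q) := by
  set A := Q + (μ : ℂ) • 1 with hA
  have hPD := posdef_shift hQ hμ
  have hAv : A *ᵥ v = (μ : ℂ) • v := by
    rw [hA, Matrix.add_mulVec, hv, Matrix.smul_mulVec, Matrix.one_mulVec, zero_add]
  have hBv : A⁻¹ *ᵥ v = ((μ : ℂ))⁻¹ • v := by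
    have h1 : A⁻¹ *ᵥ (A *ᵥ v) = v := inv_mul_vec hPD v
    rw [hAv, Matrix.mulVec_smul] at h1
    have hμne : ((μ : ℂ)) ≠ 0 := by exact_mod_cast hμ.ne'
    calc A⁻¹ *ᵥ v = ((μ:ℂ))⁻¹ • ((μ:ℂ) • (A⁻¹ *ᵥ v)) := by
          rw [smul_smul, inv_mul_cancel₀ hμne, one_smul]
    _ = ((μ:ℂ))⁻¹ • v := by rw [h1]
  have hBH : (A⁻¹).IsHermitian := hPD.isHermitian.inv
  have key : star v ⬝ᵥ (A⁻¹ *ᵥ q) = ((μ:ℂ))⁻¹ * (star v ⬝ᵥ q) := by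
    rw [herm_swap hBH, hBv]
    rw [star_smul, smul_dotProduct]
    congr 1
    rw [← Complex.ofReal_inv, Complex.star_def, Complex.conj_ofReal, Complex.ofReal_inv]
  have habs : ‖star v ⬝ᵥ (A⁻¹ *ᵥ q)‖ = ‖star v ⬝ᵥ q‖ / μ := by
    rw [key, norm_mul, norm_inv]
    rw [Complex.norm_real, Real.norm_of_nonneg hμ.le, div_eq_inv_mul]
  rw [← habs]
  exact cs_dot v _

lemma caseB_bound (hQ : Q.PosSemidef) (y : Fin n → ℂ) {μ : ℝ} (hμ : 0 < μ) :
    (star ((Q + (μ : ℂ) • 1)⁻¹ *ᵥ (Q *ᵥ y)) ⬝ᵥ ((Q + (μ : ℂ) • 1)⁻¹ *ᵥ (Q *ᵥ y))).re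
      ≤ (star y ⬝ᵥ (Q *ᵥ y)).re / (2 * μ) := by
  set A := Q + (μ : ℂ) • 1 with hA
  have hPD := posdef_shift hQ hμ
  set w := A⁻¹ *ᵥ (Q *ᵥ y) with hw
  have hAw : A *ᵥ w = Q *ᵥ y := mul_inv_vec hPD _
  set β := (star y ⬝ᵥ (Q *ᵥ y)).re with hβ
  have h1 : (star w ⬝ᵥ (Q *ᵥ y)).re
      = (star w ⬝ᵥ (Q *ᵥ w)).re + μ * (star w ⬝ᵥ w).re := by
    rw [← hAw, dot_shift]
    simp [Complex.add_re, Complex.mul_re]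
  have h2 : (star y ⬝ᵥ (Q *ᵥ w)).re = (star w ⬝ᵥ (Q *ᵥ y)).re := by
    rw [herm_swap hQ.isHermitian y w, re_dot_comm]
  have h3 : 0 ≤ (star (y - w) ⬝ᵥ (Q *ᵥ (y - w))).re := hQ.re_dotProduct_nonneg _
  have hexp : (star (y - w) ⬝ᵥ (Q *ᵥ (y - w))).re
      = β - (star y ⬝ᵥ (Q *ᵥ w)).re - (star w ⬝ᵥ (Q *ᵥ y)).re
        + (star w ⬝ᵥ (Q *ᵥ w)).re := by
    rw [Matrix.mulVec_sub]
    simp only [star_sub, sub_dotProduct, dotProduct_sub, Complex.sub_re]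
    ring
  have h4 : 0 ≤ (star w ⬝ᵥ (Q *ᵥ w)).re := hQ.re_dotProduct_nonneg _
  have h5 : 0 ≤ β - (star w ⬝ᵥ (Q *ᵥ w)).re - 2 * μ * (star w ⬝ᵥ w).re := by
    rw [hexp, h2, h1] at h3
    linarith
  rw [le_div_iff₀ (by positivity)]
  linarith

end small

section sol
variable {Q : Matrix (Fin n) (Fin n) ℂ}

open scoped InnerProductSpace in
lemma caseB_solution (hQ : Q.PosSemidef) (q : Fin n → ℂ)
    (horth : ∀ v : Fin n → ℂ, Q *ᵥ v = 0 → star q ⬝ᵥ v = 0) :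
    ∃ x₀ y : Fin n → ℂ, Q *ᵥ y = x₀ ∧ Q *ᵥ x₀ = q := by
  classical
  set T := Matrix.toEuclideanLin Q with hT
  set K := LinearMap.range T with hK
  have hker : ∀ b : EuclideanSpace ℂ (Fin n), b ∈ Kᗮ →
      Q *ᵥ (WithLp.equiv 2 (Fin n → ℂ) b) = 0 := by
    intro b hb
    have h0 : ⟪b, T b⟫_ℂ = 0 :=
      Submodule.inner_left_of_mem_orthogonal (LinearMap.mem_range_self T b) hb
    change (Q *ᵥ (WithLp.equiv 2 (Fin n → ℂ) b)) ⬝ᵥ star (WithLp.equiv 2 (Fin n → ℂ) b) = 0 at h0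
    rw [dotProduct_comm] at h0
    exact (hQ.dotProduct_mulVec_zero_iff _).mp h0
  set q₂ : EuclideanSpace ℂ (Fin n) := (WithLp.equiv 2 (Fin n → ℂ)).symm q with hq₂
  -- step 1 : q ∈ K
  set a : EuclideanSpace ℂ (Fin n) := (K.orthogonalProjectionOnto q₂ : EuclideanSpace ℂ (Fin n))
  have hb : q₂ - a ∈ Kᗮ := K.sub_starProjection_mem_orthogonal q₂
  have hQb : Q *ᵥ (WithLp.equiv 2 (Fin n → ℂ) (q₂ - a)) = 0 := hker _ hb
  have hqb : ⟪q₂, q₂ - a⟫_ℂ = 0 := by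
    rw [EuclideanSpace.inner_eq_star_dotProduct, dotProduct_comm]
    exact horth _ hQb
  have hab : ⟪a, q₂ - a⟫_ℂ = 0 :=
    Submodule.inner_right_of_mem_orthogonal (SetLike.coe_mem _) hb
  have hbb : q₂ - a = 0 := by
    rw [← inner_self_eq_zero (𝕜 := ℂ)]
    rw [show ⟪q₂ - a, q₂ - a⟫_ℂ = ⟪q₂, q₂ - a⟫_ℂ - ⟪a, q₂ - a⟫_ℂ from inner_sub_left _ _ _,
      hqb, hab, sub_zero]
  have hqK : q₂ ∈ K := by
    have : q₂ = a := by rwa [sub_eq_zero] at hbb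
    rw [this]; exact SetLike.coe_mem _
  obtain ⟨z, hz⟩ := hqK
  -- step 2 : decompose z
  set a' : EuclideanSpace ℂ (Fin n) := (K.orthogonalProjectionOnto z : EuclideanSpace ℂ (Fin n))
  have hb' : z - a' ∈ Kᗮ := K.sub_starProjection_mem_orthogonal z
  have hQb' : Q *ᵥ (WithLp.equiv 2 (Fin n → ℂ) (z - a')) = 0 := hker _ hb'
  obtain ⟨y, hy⟩ := SetLike.coe_mem (K.orthogonalProjectionOnto z)
  refine ⟨WithLp.equiv 2 (Fin n → ℂ) a', WithLp.equiv 2 (Fin n → ℂ) y, ?_, ?_⟩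
  · have h : WithLp.equiv 2 (Fin n → ℂ) (T y) = Q *ᵥ (WithLp.equiv 2 (Fin n → ℂ) y) := by
      rfl
    rw [← h, hy]
  · have hsub : WithLp.equiv 2 (Fin n → ℂ) (z - a')
        = WithLp.equiv 2 (Fin n → ℂ) z - WithLp.equiv 2 (Fin n → ℂ) a' := rfl
    rw [hsub, Matrix.mulVec_sub] at hQb'
    have hz' : Q *ᵥ (WithLp.equiv 2 (Fin n → ℂ) z) = q := by
      have h : WithLp.equiv 2 (Fin n → ℂ) (T z) = Q *ᵥ (WithLp.equiv 2 (Fin n → ℂ) z) := by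
        rfl
      rw [← h, hz]
      rfl
    rw [sub_eq_zero] at hQb'
    rw [← hQb', hz']

end sol

section opt
variable {Q : Matrix (Fin n) (Fin n) ℂ} {q : Fin n → ℂ}

lemma optimal_aux (hQ : Q.PosSemidef) {μ ρ : ℝ} (hμ : 0 < μ)
    (hnorm : eucNorm ((Q + (μ : ℂ) • 1)⁻¹ *ᵥ q) = ρ)
    (x : Fin n → ℂ) (hx : eucNorm x ≤ ρ) :
    (star ((Q + (μ : ℂ) • 1)⁻¹ *ᵥ q) ⬝ᵥ (Q *ᵥ ((Q + (μ : ℂ) • 1)⁻¹ *ᵥ q))).re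
        - 2 * (star q ⬝ᵥ ((Q + (μ : ℂ) • 1)⁻¹ *ᵥ q)).re
        + μ * (star (x - (Q + (μ : ℂ) • 1)⁻¹ *ᵥ q) ⬝ᵥ (x - (Q + (μ : ℂ) • 1)⁻¹ *ᵥ q)).re
      ≤ (star x ⬝ᵥ (Q *ᵥ x)).re - 2 * (star q ⬝ᵥ x).re := by
  set A := Q + (μ : ℂ) • 1 with hA
  have hPD := posdef_shift hQ hμ
  set xs := A⁻¹ *ᵥ q with hxs
  set d := x - xs with hd
  have hxd : x = xs + d := by rw [hd]; ring
  have hq : A *ᵥ xs = q := mul_inv_vec hPD q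
  -- quadratic expansion
  have hcross : (star d ⬝ᵥ (Q *ᵥ xs)).re = (star xs ⬝ᵥ (Q *ᵥ d)).re := by
    rw [herm_swap hQ.isHermitian d xs, re_dot_comm]
  have hxQx : (star x ⬝ᵥ (Q *ᵥ x)).re
      = (star xs ⬝ᵥ (Q *ᵥ xs)).re + 2 * (star xs ⬝ᵥ (Q *ᵥ d)).re
        + (star d ⬝ᵥ (Q *ᵥ d)).re := by
    rw [hxd, Matrix.mulVec_add]
    simp only [star_add, add_dotProduct, dotProduct_add, Complex.add_re]
    rw [hcross]; ring
  have hqx : (star q ⬝ᵥ x).re = (star q ⬝ᵥ xs).re + (star q ⬝ᵥ d).re := by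
    rw [hxd, dotProduct_add, Complex.add_re]
  have hqd : (star q ⬝ᵥ d).re
      = (star xs ⬝ᵥ (Q *ᵥ d)).re + μ * (star xs ⬝ᵥ d).re := by
    have h1 : star q ⬝ᵥ d = star xs ⬝ᵥ (A *ᵥ d) := by
      rw [← hq, (herm_swap hPD.isHermitian xs d).symm]
    rw [h1, hA, dot_shift]
    simp [Complex.add_re, Complex.mul_re]
  -- constraint
  have hcon : 2 * (star xs ⬝ᵥ d).re ≤ - (star d ⬝ᵥ d).re := by
    have hxρ : (star x ⬝ᵥ x).re ≤ ρ ^ 2 := by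
      rw [← eucNorm_sq]
      have := eucNorm_nonneg x
      nlinarith
    have hxsρ : (star xs ⬝ᵥ xs).re = ρ ^ 2 := by rw [← eucNorm_sq, hnorm]
    have hexp : (star x ⬝ᵥ x).re
        = (star xs ⬝ᵥ xs).re + 2 * (star xs ⬝ᵥ d).re + (star d ⬝ᵥ d).re := by
      rw [hxd]; exact rsq_expand xs d
    linarith
  have hdQd : 0 ≤ (star d ⬝ᵥ (Q *ᵥ d)).re := hQ.re_dotProduct_nonneg d
  rw [hxQx, hqx, hqd]
  nlinarith [hcon, hμ.le]

end opt
/-- convex trust-region subproblem, active-constraint case: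
let Q be Hermitian positive semidefinite and ρ > 0. Suppose either q is NOT orthogonal
to the null space of Q, or q is orthogonal to the null space of Q (hence Q†q, described
by Q x = q ∧ x ∈ range Q, exists) but ‖Q†q‖₂ > ρ. Then there is a unique μ⋆ > 0 with
‖(Q + μ⋆I)⁻¹q‖₂ = ρ, and x⋆ = (Q + μ⋆I)⁻¹q is the unique global minimizer of
g(x) = Re(xᴴQx) − 2Re(qᴴx) over {x : ‖x‖₂ ≤ ρ}. -/
theorem cvx_trust_region_boundary {n : ℕ}
    (Q : Matrix (Fin n) (Fin n) ℂ) (hQ : Q.PosSemidef)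
    (q : Fin n → ℂ) (ρ : ℝ) (hρ : 0 < ρ)
    (hcase : (∃ v : Fin n → ℂ, Q *ᵥ v = 0 ∧ star q ⬝ᵥ v ≠ 0)
      ∨ ((∀ v : Fin n → ℂ, Q *ᵥ v = 0 → star q ⬝ᵥ v = 0)
          ∧ ∀ x : Fin n → ℂ, Q *ᵥ x = q → (∃ y, Q *ᵥ y = x) → ρ < eucNorm x)) :
    ∃ μs : ℝ, 0 < μs
      ∧ eucNorm ((Q + (μs : ℂ) • 1)⁻¹ *ᵥ q) = ρ
      ∧ (∀ μ : ℝ, 0 < μ → eucNorm ((Q + (μ : ℂ) • 1)⁻¹ *ᵥ q) = ρ → μ = μs)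
      ∧ (∀ x : Fin n → ℂ, eucNorm x ≤ ρ →
          (star ((Q + (μs : ℂ) • 1)⁻¹ *ᵥ q) ⬝ᵥ (Q *ᵥ ((Q + (μs : ℂ) • 1)⁻¹ *ᵥ q))).re
              - 2 * (star q ⬝ᵥ ((Q + (μs : ℂ) • 1)⁻¹ *ᵥ q)).re
            ≤ (star x ⬝ᵥ (Q *ᵥ x)).re - 2 * (star q ⬝ᵥ x).re)
      ∧ (∀ x : Fin n → ℂ, eucNorm x ≤ ρ →
          (star x ⬝ᵥ (Q *ᵥ x)).re - 2 * (star q ⬝ᵥ x).re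
            = (star ((Q + (μs : ℂ) • 1)⁻¹ *ᵥ q) ⬝ᵥ (Q *ᵥ ((Q + (μs : ℂ) • 1)⁻¹ *ᵥ q))).re
              - 2 * (star q ⬝ᵥ ((Q + (μs : ℂ) • 1)⁻¹ *ᵥ q)).re →
          x = (Q + (μs : ℂ) • 1)⁻¹ *ᵥ q) := by
  classical
  have hqne : q ≠ 0 := by
    rintro rfl
    rcases hcase with ⟨v, hv, hne⟩ | ⟨horth, hbig⟩
    · exact hne (by simp)
    · have h := hbig 0 (by simp) ⟨0, by simp⟩
      have h0 : eucNorm (0 : Fin n → ℂ) = 0 := by simp [eucNorm]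
      rw [h0] at h; linarith
  set F : ℝ → ℝ := fun μ => eucNorm ((Q + (μ : ℂ) • 1)⁻¹ *ᵥ q) with hF
  have hmono : ∀ μ₁ μ₂ : ℝ, 0 < μ₁ → μ₁ < μ₂ → F μ₂ < F μ₁ := by
    intro μ₁ μ₂ h1 h12
    rw [hF]; dsimp only
    rw [eucNorm, eucNorm]
    exact Real.sqrt_lt_sqrt (rsq_nonneg _) (strict_mono_rsq hQ hqne h1 h12)
  have hsmall : ∃ μlo : ℝ, 0 < μlo ∧ ρ < F μlo := by
    rcases hcase with ⟨v, hv, hne⟩ | ⟨horth, hbig⟩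
    · -- case A
      have hvq : star v ⬝ᵥ q ≠ 0 := by
        rw [Matrix.star_dotProduct]
        simpa using hne
      set c := ‖star v ⬝ᵥ q‖ with hc
      have hcpos : 0 < c := by
        rw [hc]; exact norm_pos_iff.mpr hvq
      have hvne : v ≠ 0 := by
        rintro rfl; simp at hvq
      have hEv : 0 < eucNorm v := by
        rcases eq_or_lt_of_le (eucNorm_nonneg v) with h | h
        · exfalso; apply hvne
          apply rsq_eq_zero_iff.mp
          rw [← eucNorm_sq, ← h]; ring
        · exact h
      set E := eucNorm v with hE
      refine ⟨min 1 (c / (E * (ρ + 1))), ?_, ?_⟩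
      · have : 0 < c / (E * (ρ + 1)) := by positivity
        exact lt_min one_pos this
      · set μlo := min 1 (c / (E * (ρ + 1))) with hμlo
        have hμpos : 0 < μlo := by
          have : 0 < c / (E * (ρ + 1)) := by positivity
          exact lt_min one_pos this
        have hb := caseA_bound (q := q) hQ hv hμpos
        rw [div_le_iff₀ hμpos] at hb
        have hμle : μlo ≤ c / (E * (ρ + 1)) := min_le_right _ _
        rw [le_div_iff₀ (by positivity)] at hμle
        have hFpos := eucNorm_nonneg ((Q + (μlo : ℂ) • 1)⁻¹ *ᵥ q)
        rw [hF]; dsimp only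
        nlinarith [hb, hμle, hμpos, hEv, hFpos]
    · -- case B
      obtain ⟨x₀, y, hy, hx₀⟩ := caseB_solution hQ q horth
      have hbig0 : ρ < eucNorm x₀ := hbig x₀ hx₀ ⟨y, hy⟩
      set ε := eucNorm x₀ - ρ with hε
      have hεpos : 0 < ε := by rw [hε]; linarith
      set β := (star y ⬝ᵥ (Q *ᵥ y)).re with hβ
      have hβnn : 0 ≤ β := hQ.re_dotProduct_nonneg y
      set μlo := ε ^ 2 / (β + 1) with hμlo
      have hμpos : 0 < μlo := by positivity
      refine ⟨μlo, hμpos, ?_⟩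
      have hPD := posdef_shift hQ hμpos
      set A := Q + (μlo : ℂ) • 1 with hA
      set w := A⁻¹ *ᵥ (Q *ᵥ y) with hw
      have hwb : (star w ⬝ᵥ w).re ≤ β / (2 * μlo) := caseB_bound hQ y hμpos
      have hdecomp : A⁻¹ *ᵥ q = x₀ - (μlo : ℂ) • w := by
        have hAx₀ : A *ᵥ x₀ = q + (μlo : ℂ) • (Q *ᵥ y) := by
          rw [hA, Matrix.add_mulVec, hx₀, Matrix.smul_mulVec, Matrix.one_mulVec, hy]
        have : A⁻¹ *ᵥ (A *ᵥ x₀) = x₀ := inv_mul_vec hPD x₀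
        rw [hAx₀, Matrix.mulVec_add, Matrix.mulVec_smul] at this
        rw [← hw] at this
        rw [eq_sub_iff_add_eq]; exact this
      have hnw : eucNorm ((μlo : ℂ) • w) < ε := by
        have h1 : eucNorm ((μlo : ℂ) • w) = μlo * eucNorm w := by
          rw [eucNorm_smul, abs_of_pos hμpos]
        have hkey : μlo * (β + 1) = ε ^ 2 := by
          rw [hμlo]; field_simp
        have hs : eucNorm w ^ 2 ≤ β / (2 * μlo) := by rw [eucNorm_sq]; exact hwb
        have hsnn := eucNorm_nonneg w
        have hsq : (μlo * eucNorm w) ^ 2 ≤ μlo * β / 2 := by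
          have h2 : μlo ^ 2 * (β / (2 * μlo)) = μlo * β / 2 := by
            field_simp
          nlinarith [hs, sq_nonneg μlo]
        have hlt : μlo * β / 2 < ε ^ 2 := by
          rw [← hkey]; nlinarith [hμpos, hβnn]
        rw [h1]
        nlinarith [mul_nonneg hμpos.le hsnn, hεpos]
      rw [hF]; dsimp only
      rw [← hA, hdecomp]
      have := eucNorm_sub_le x₀ ((μlo : ℂ) • w)
      linarith
  obtain ⟨μlo, hμlopos, hFlo⟩ := hsmall
  set μhi := max (μlo + 1) (eucNorm q / ρ + 1) with hμhi
  have hlth : μlo < μhi := lt_of_lt_of_le (lt_add_one μlo) (le_max_left _ _)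
  have hμhipos : 0 < μhi := hμlopos.trans hlth
  have hFhi : F μhi < ρ := by
    have h1 : F μhi ≤ eucNorm q / μhi := bound_large hQ hμhipos
    have h2 : eucNorm q / μhi < ρ := by
      rw [div_lt_iff₀ hμhipos]
      have h3 : eucNorm q / ρ + 1 ≤ μhi := le_max_right _ _
      have h4 : eucNorm q + ρ ≤ ρ * μhi := by
        have := mul_le_mul_of_nonneg_left h3 hρ.le
        rw [mul_add, mul_one, mul_div_cancel₀ _ hρ.ne'] at this
        linarith
      linarith
    linarith
  have hcont : ContinuousOn F (Set.Icc μlo μhi) := fun t ht =>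
    (contF hQ q (lt_of_lt_of_le hμlopos ht.1)).continuousWithinAt
  have hsub := intermediate_value_Icc' hlth.le hcont
  have hρmem : ρ ∈ Set.Icc (F μhi) (F μlo) := ⟨hFhi.le, hFlo.le⟩
  obtain ⟨μs, hμsmem, hFμs⟩ := hsub hρmem
  have hμspos : 0 < μs := lt_of_lt_of_le hμlopos hμsmem.1
  refine ⟨μs, hμspos, hFμs, ?_, ?_, ?_⟩
  · intro μ hμ hFμ
    rcases lt_trichotomy μ μs with h | h | h
    · exact absurd (hmono μ μs hμ h) (by rw [show F μ = ρ from hFμ, show F μs = ρ from hFμs]; simp)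
    · exact h
    · exact absurd (hmono μs μ hμspos h) (by rw [show F μ = ρ from hFμ, show F μs = ρ from hFμs]; simp)
  · intro x hx
    have h := optimal_aux hQ hμspos hFμs x hx
    have h2 := rsq_nonneg (x - (Q + (μs : ℂ) • 1)⁻¹ *ᵥ q)
    nlinarith [h, h2, hμspos]
  · intro x hx heq
    have h := optimal_aux hQ hμspos hFμs x hx
    have h2 := rsq_nonneg (x - (Q + (μs : ℂ) • 1)⁻¹ *ᵥ q)
    have h3 : (star (x - (Q + (μs : ℂ) • 1)⁻¹ *ᵥ q) ⬝ᵥ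
        (x - (Q + (μs : ℂ) • 1)⁻¹ *ᵥ q)).re = 0 := by
      nlinarith [h, h2, hμspos]
    have h4 := rsq_eq_zero_iff.mp h3
    rwa [sub_eq_zero] at h4
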